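/- The Paris–Harrington principle holds: for all n, k, m there exists N such that every coloring of the n-element subsets of {1,...,N} with k colors has a homogeneous set H of size at least m that is relatively large, i.e., |H| ≥ min H. -/
import Mathlib

theorem inf_ramsey (k : ℕ) : ∀ (n : ℕ) (f : Finset ℕ → Fin k) (S : Set ℕ), S.Infinite →
    ∃ T : Set ℕ, T ⊆ S ∧ T.Infinite ∧ ∃ c : Fin k,
      ∀ e : Finset ℕ, ↑e ⊆ T → e.card = n → f e = c := by
  intro n
  induction n with
  | zero =>
    intro f S hS
    refine ⟨S, subset_rfl, hS, f ∅, fun e he hc => ?_⟩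
    rw [Finset.card_eq_zero.mp hc]
  | succ n ih =>
    intro f S hS
    have step : ∀ S' : Set ℕ, S'.Infinite → ∃ y : ℕ × Fin k × Set ℕ,
        y.1 ∈ S' ∧ y.2.2 ⊆ S' ∧ (∀ x ∈ y.2.2, y.1 < x) ∧ y.2.2.Infinite ∧
        ∀ e : Finset ℕ, ↑e ⊆ y.2.2 → e.card = n → f (insert y.1 e) = y.2.1 := by
      intro S' hS'
      obtain ⟨a, ha⟩ := hS'.nonempty
      have h2 : ({x ∈ S' | a < x} : Set ℕ).Infinite := by
        have he : {x ∈ S' | a < x} = S' \ Set.Iic a := by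
          ext x
          simp only [Set.mem_setOf_eq, Set.mem_diff, Set.mem_Iic, not_le]
        rw [he]
        exact hS'.diff (Set.finite_Iic a)
      obtain ⟨T, hTsub, hTinf, c, hc⟩ := ih (fun e => f (insert a e)) _ h2
      exact ⟨(a, c, T), ha, fun x hx => (hTsub hx).1, fun x hx => (hTsub hx).2, hTinf, hc⟩
    choose g hg1 hg2 hg3 hg4 hg5 using step
    let seq : ℕ → {S' : Set ℕ // S'.Infinite} := fun i =>
      Nat.rec ⟨S, hS⟩ (fun _ p => ⟨(g p.1 p.2).2.2, hg4 p.1 p.2⟩) i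
    set A : ℕ → ℕ := fun i => (g (seq i).1 (seq i).2).1 with hA
    set C : ℕ → Fin k := fun i => (g (seq i).1 (seq i).2).2.1 with hC
    have hseq : ∀ i, (seq (i+1)).1 = (g (seq i).1 (seq i).2).2.2 := fun i => rfl
    have hmem : ∀ i, A i ∈ (seq i).1 := fun i => hg1 _ _
    have hsub : ∀ i, (seq (i+1)).1 ⊆ (seq i).1 := fun i => hg2 _ _
    have hgt : ∀ i, ∀ x ∈ (seq (i+1)).1, A i < x := fun i => hg3 _ _
    have hhom : ∀ i, ∀ e : Finset ℕ, ↑e ⊆ (seq (i+1)).1 → e.card = n →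
        f (insert (A i) e) = C i := fun i => hg5 _ _
    have hmono : ∀ i j, i ≤ j → (seq j).1 ⊆ (seq i).1 := by
      intro i j hij
      induction j with
      | zero => simp_all
      | succ j ihj =>
        rcases Nat.eq_or_lt_of_le hij with h | h
        · rw [h]
        · exact (ihj (Nat.lt_succ_iff.mp h)).trans' (hsub j)
    have hAmono : StrictMono A := by
      apply strictMono_nat_of_lt_succ
      intro i
      exact hgt i _ (hmem (i+1))
    obtain ⟨c, hc⟩ := Finite.exists_infinite_fiber C
    rw [Set.infinite_coe_iff] at hc
    refine ⟨A '' (C ⁻¹' {c}), ?_, hc.image (hAmono.injective.injOn), c, ?_⟩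
    · rintro x ⟨i, _, rfl⟩
      exact hmono 0 i (Nat.zero_le i) (hmem i)
    · intro e he hcard
      have hne : e.Nonempty := Finset.card_pos.mp (by omega)
      obtain ⟨i, hi, hieq⟩ := he (e.min'_mem hne)
      have hC : C i = c := hi
      have he' : ↑(e.erase (e.min' hne)) ⊆ (seq (i+1)).1 := by
        intro y hy
        simp only [Finset.coe_erase, Set.mem_diff, Finset.mem_coe, Set.mem_singleton_iff] at hy
        obtain ⟨j, _, hjeq⟩ := he hy.1
        have hlt : A i < A j := by
          rw [hieq]
          rcases lt_or_eq_of_le (e.min'_le y hy.1) with h | h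
          · rw [hjeq]; exact h
          · exact absurd h.symm hy.2
        have hij : i < j := hAmono.lt_iff_lt.mp hlt
        rw [← hjeq]
        exact hmono (i+1) j hij (hmem j)
      have hcard' : (e.erase (e.min' hne)).card = n := by
        rw [Finset.card_erase_of_mem (e.min'_mem hne), hcard]
        omega
      have hthis := hhom i _ he' hcard'
      have hAe : A i ∈ e := by rw [hieq]; exact e.min'_mem hne
      have h2 : insert (A i) (e.erase (e.min' hne)) = e := by
        rw [← hieq]
        exact Finset.insert_erase hAe
      rw [← h2, hthis, hC]

/-- The Paris–Harrington principle. -/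
theorem paris_harrington :
    ∀ n k m : ℕ, ∃ N : ℕ, ∀ f : Finset ℕ → Fin k,
      ∃ H : Finset ℕ, H ⊆ Finset.Icc 1 N ∧ m ≤ H.card ∧
        (∃ c : Fin k, ∀ e ⊆ H, e.card = n → f e = c) ∧
        (∀ hne : H.Nonempty, H.min' hne ≤ H.card) := by
  intro n k m
  by_contra hcon
  simp only [not_exists] at hcon
  set P : ℕ → (Finset ℕ → Fin k) → Finset ℕ → Prop := fun N f H =>
    H ⊆ Finset.Icc 1 N ∧ m ≤ H.card ∧
      (∃ c : Fin k, ∀ e ⊆ H, e.card = n → f e = c) ∧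
      (∀ hne : H.Nonempty, H.min' hne ≤ H.card) with hP
  set Bad : ℕ → Set (Finset ℕ → Fin k) := fun N => {f | ∀ H : Finset ℕ, ¬ P N f H}
    with hBad
  have hne : ∀ N, (Bad N).Nonempty := by
    intro N
    obtain ⟨f, hf⟩ := not_forall.mp (hcon N)
    exact ⟨f, not_exists.mp hf⟩
  have hclosed : ∀ N, IsClosed (Bad N) := by
    intro N
    rw [← isOpen_compl_iff]
    rw [isOpen_iff_mem_nhds]
    intro f hf
    simp only [hBad, Set.mem_compl_iff, Set.mem_setOf_eq, not_forall, not_not, hP] at hf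
    obtain ⟨H, hf⟩ := hf
    have hV : IsOpen (⋂ e ∈ H.powerset, {g : Finset ℕ → Fin k | g e = f e}) := by
      apply isOpen_biInter_finset
      intro e _
      show IsOpen ((fun g : Finset ℕ → Fin k => g e) ⁻¹' {f e})
      exact IsOpen.preimage (continuous_apply e) (isOpen_discrete ({f e} : Set (Fin k)))
    refine Filter.mem_of_superset (hV.mem_nhds ?_) ?_
    · simp only [Set.mem_iInter, Set.mem_setOf_eq]
      intro e _
      trivial
    · intro g hg
      simp only [Set.mem_iInter, Set.mem_setOf_eq, Finset.mem_powerset] at hg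
      simp only [hBad, Set.mem_compl_iff, Set.mem_setOf_eq, not_forall, not_not, hP]
      obtain ⟨h1, h2, ⟨c, h3⟩, h4⟩ := hf
      refine ⟨H, h1, h2, ⟨c, fun e he hce => ?_⟩, h4⟩
      rw [hg e he]
      exact h3 e he hce
  have hdir : Directed (· ⊇ ·) Bad := by
    intro N M
    refine ⟨max N M, fun f hf H hH => ?_, fun f hf H hH => ?_⟩
    · exact hf H ⟨hH.1.trans (Finset.Icc_subset_Icc_right (le_max_left N M)), hH.2⟩
    · exact hf H ⟨hH.1.trans (Finset.Icc_subset_Icc_right (le_max_right N M)), hH.2⟩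
  obtain ⟨f, hfbad⟩ :=
    IsCompact.nonempty_iInter_of_directed_nonempty_isCompact_isClosed Bad hdir hne
      (fun N => (hclosed N).isCompact) hclosed
  simp only [Set.mem_iInter] at hfbad
  -- apply infinite Ramsey
  obtain ⟨T, hTS, hTinf, c, hc⟩ := inf_ramsey k n f (Set.Ioi 0) (Set.Ioi_infinite 0)
  obtain ⟨a, ha⟩ := hTinf.nonempty
  have hT' : ({x ∈ T | a < x} : Set ℕ).Infinite := by
    have he : {x ∈ T | a < x} = T \ Set.Iic a := by
      ext x
      simp only [Set.mem_setOf_eq, Set.mem_diff, Set.mem_Iic, not_le]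
    rw [he]
    exact hTinf.diff (Set.finite_Iic a)
  obtain ⟨H₁, hH₁sub, hH₁card⟩ := hT'.exists_subset_card_eq (max m a)
  have haH₁ : a ∉ H₁ := fun hmem => lt_irrefl a (hH₁sub hmem).2
  set H : Finset ℕ := insert a H₁ with hHdef
  have hHcard : H.card = max m a + 1 := by
    rw [Finset.card_insert_of_notMem haH₁, hH₁card]
  have hHT : ↑H ⊆ T := by
    intro x hx
    rcases Finset.mem_insert.mp hx with h | h
    · exact h ▸ ha
    · exact (hH₁sub h).1
  have hHne : H.Nonempty := ⟨a, Finset.mem_insert_self a H₁⟩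
  set N : ℕ := H.max' hHne with hNdef
  apply hfbad N H
  refine ⟨?_, ?_, ⟨c, fun e he hce => hc e (fun x hx => hHT (he hx)) hce⟩, fun _ => ?_⟩
  · intro x hx
    rw [Finset.mem_Icc]
    exact ⟨hTS (hHT hx), H.le_max' x hx⟩
  · rw [hHcard]; omega
  · calc H.min' hHne ≤ a := H.min'_le a (Finset.mem_insert_self a H₁)
      _ ≤ H.card := by rw [hHcard]; omega
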